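/- Let λ > 0, Δt > 0, and set x = Δt√λ. If a ∈ (1/2 - 2/x, 1/2), then the two eigenvalues of the 2×2 matrix G with rows [0,1] and [(2+aΔt²λ)/(aΔt²λ - Δt²λ - 2), (Δt²λ-4)/(aΔt²λ - Δt²λ - 2)] are complex conjugates with modulus strictly less than 1; if a ∈ (1/2, 1/2 + 2/x), their modulus is strictly greater than 1. -/

import Mathlib

open Matrix Complex

lemma quad_key (p q : ℝ) (hd : q^2 + 4*p < 0) (μ : ℂ)
    (hμ : μ^2 - (q:ℂ)*μ - (p:ℂ) = 0) :
    ((starRingEnd ℂ) μ)^2 - (q:ℂ)*((starRingEnd ℂ) μ) - (p:ℂ) = 0 ∧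
    ‖μ‖ ^ 2 = -p := by
  constructor
  · have h := congrArg (starRingEnd ℂ) hμ
    simpa [map_sub, _root_.map_mul, map_pow, Complex.conj_ofReal] using h
  · set u := μ.re with hu
    set v := μ.im with hv
    have hre := congrArg Complex.re hμ
    have him := congrArg Complex.im hμ
    simp [pow_two, Complex.mul_re, Complex.mul_im, ← hu, ← hv] at hre him
    rw [Complex.sq_norm, Complex.normSq_apply, ← hu, ← hv]
    rcases mul_eq_zero.mp (show v * (2*u - q) = 0 by nlinarith) with h0 | h0
    · nlinarith [sq_nonneg (2*u - q)]
    · linear_combination (-1:ℝ)*hre + u*h0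

lemma real_key (x a D p q : ℝ) (hx : 0 < x)
    (hD : D = a*x^2 - x^2 - 2) (hp : p = (2+a*x^2)/D) (hq : q = (x^2-4)/D)
    (h1 : (2*a-1)*x < 4) (h2 : -4 < (2*a-1)*x) :
    q^2 + 4*p < 0 ∧ D < 0 ∧ -p - 1 = x^2*(1-2*a)/D := by
  subst hD hp hq
  have hDneg : a*x^2 - x^2 - 2 < 0 := by
    nlinarith [sq_nonneg (x-2), mul_lt_mul_of_pos_right h1 hx]
  have hD0 : a*x^2 - x^2 - 2 ≠ 0 := hDneg.ne
  refine ⟨?_, hDneg, ?_⟩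
  · have hqp : ((x^2-4)/(a*x^2 - x^2 - 2))^2 + 4*((2+a*x^2)/(a*x^2 - x^2 - 2))
        = (x^2*((2*a-1)^2*x^2 - 16))/(a*x^2 - x^2 - 2)^2 := by
      field_simp; ring
    rw [hqp]
    apply div_neg_of_neg_of_pos _ (by positivity)
    have hlt : (2*a-1)^2*x^2 - 16 < 0 := by nlinarith
    exact mul_neg_of_pos_of_neg (by positivity) hlt
  · rw [eq_div_iff hD0, sub_mul, neg_mul, div_mul_cancel₀ _ hD0]; ring

/-- eigenvalues of the P¹-DG matrix with stabilization s = aΔt². -/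
theorem stmt_2 (lam Δt a : ℝ) (hlam : 0 < lam) (hΔt : 0 < Δt)
    (x : ℝ) (hx : x = Δt * Real.sqrt lam)
    (G : Matrix (Fin 2) (Fin 2) ℂ)
    (hG : G = !![0, 1;
      (((2 + a * Δt ^ 2 * lam) / (a * Δt ^ 2 * lam - Δt ^ 2 * lam - 2) : ℝ) : ℂ),
      (((Δt ^ 2 * lam - 4) / (a * Δt ^ 2 * lam - Δt ^ 2 * lam - 2) : ℝ) : ℂ)]) :
    (a ∈ Set.Ioo (1 / 2 - 2 / x) (1 / 2) →
      ∀ μ : ℂ, (G - μ • (1 : Matrix (Fin 2) (Fin 2) ℂ)).det = 0 →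
        (G - (starRingEnd ℂ) μ • (1 : Matrix (Fin 2) (Fin 2) ℂ)).det = 0 ∧
        ‖μ‖ < 1) ∧
    (a ∈ Set.Ioo (1 / 2) (1 / 2 + 2 / x) →
      ∀ μ : ℂ, (G - μ • (1 : Matrix (Fin 2) (Fin 2) ℂ)).det = 0 →
        (G - (starRingEnd ℂ) μ • (1 : Matrix (Fin 2) (Fin 2) ℂ)).det = 0 ∧
        1 < ‖μ‖) := by
  have hxpos : 0 < x := by rw [hx]; positivity
  have hxy : x^2 = Δt^2 * lam := by rw [hx, mul_pow, Real.sq_sqrt hlam.le]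
  set D := a * Δt ^ 2 * lam - Δt ^ 2 * lam - 2 with hD
  set q := (Δt ^ 2 * lam - 4) / D with hq
  set p := (2 + a * Δt ^ 2 * lam) / D with hp
  have px : p = (2 + a*x^2)/D := by
    rw [hp, show a * Δt^2 * lam = a * x^2 from by rw [hxy]; ring]
  have qx : q = (x^2 - 4)/D := by
    rw [hq, show Δt^2*lam - 4 = x^2 - 4 from by rw [hxy]]
  have hDx : D = a*x^2 - x^2 - 2 := by rw [hD]; linear_combination (1-a)*hxy
  have h2x : (2/x)*x = 2 := div_mul_cancel₀ 2 hxpos.ne'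
  have h2xpos : 0 < 2/x := div_pos (by norm_num) hxpos
  have hdet : ∀ μ : ℂ, (G - μ • (1 : Matrix (Fin 2) (Fin 2) ℂ)).det
      = μ^2 - (q:ℂ)*μ - (p:ℂ) := by
    intro μ
    subst hG
    simp [Matrix.det_fin_two, Matrix.sub_apply, Matrix.smul_apply, Matrix.one_apply]
    ring
  constructor
  · rintro ⟨hl, hu⟩ μ hμ
    rw [hdet] at hμ
    have h1 : (2*a-1)*x < 4 := by
      nlinarith [mul_lt_mul_of_pos_right (show a < 1/2 + 2/x by linarith) hxpos]
    have h2 : -4 < (2*a-1)*x := by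
      nlinarith [mul_lt_mul_of_pos_right hl hxpos]
    obtain ⟨hdisc, hDneg, hkey⟩ := real_key x a D p q hxpos hDx px qx h1 h2
    obtain ⟨hconj, habs⟩ := quad_key p q hdisc μ hμ
    refine ⟨by rw [hdet]; exact hconj, ?_⟩
    have hnum : 0 < x^2*(1-2*a) := mul_pos (pow_pos hxpos 2) (by linarith)
    have h' : -p - 1 < 0 := by rw [hkey]; exact div_neg_of_pos_of_neg hnum hDneg
    nlinarith [norm_nonneg μ, habs]
  · rintro ⟨hl, hu⟩ μ hμ
    rw [hdet] at hμ
    have h1 : (2*a-1)*x < 4 := by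
      nlinarith [mul_lt_mul_of_pos_right hu hxpos]
    have h2 : -4 < (2*a-1)*x := by
      nlinarith [mul_lt_mul_of_pos_right (show 1/2 - 2/x < a by linarith) hxpos]
    obtain ⟨hdisc, hDneg, hkey⟩ := real_key x a D p q hxpos hDx px qx h1 h2
    obtain ⟨hconj, habs⟩ := quad_key p q hdisc μ hμ
    refine ⟨by rw [hdet]; exact hconj, ?_⟩
    have hnum : x^2*(1-2*a) < 0 :=
      mul_neg_of_pos_of_neg (pow_pos hxpos 2) (by linarith)
    have h' : 0 < -p - 1 := by rw [hkey]; exact div_pos_of_neg_of_neg hnum hDneg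
    nlinarith [norm_nonneg μ, habs]
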